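/- Correctness of the internal-energy limiting step: let Ū ∈ ℝ⁸ have positive density and 𝓔(Ū) ≥ ε for some ε > 0, and let Ǔ^(1), …, Ǔ^(Q) ∈ ℝ⁸ each have positive density component. Set m := min_q 𝓔(Ǔ^(q)) and suppose m < ε. Then θ := (𝓔(Ū) − ε)/(𝓔(Ū) − m) satisfies θ ∈ [0, 1), and for every q the limited state Û^(q) := (1 − θ) Ū + θ Ǔ^(q) has positive density and satisfies 𝓔(Û^(q)) ≥ ε; in particular Û^(q) belongs to the admissible set G. -/

import Mathlib

noncomputable section
namespace IdealMHD

/-- A conservative MHD state `U = (ρ, m, B, E)` identified with a vector in `ℝ⁸`. -/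
abbrev State := Fin 8 → ℝ

/-- density ρ -/
def dens (U : State) : ℝ := U 0

/-- momentum components `m i`, `i = 0,1,2` -/
def mom (U : State) (i : Fin 3) : ℝ := U ⟨i.1 + 1, by omega⟩

/-- magnetic field components `B i`, `i = 0,1,2` -/
def mag (U : State) (i : Fin 3) : ℝ := U ⟨i.1 + 4, by omega⟩

/-- total energy E -/
def toten (U : State) : ℝ := U 7

/-- squared Euclidean norm of a 3-vector -/
def sq3 (v : Fin 3 → ℝ) : ℝ := ∑ i, v i ^ 2

/-- Euclidean dot product of 3-vectors -/
def dot3 (v w : Fin 3 → ℝ) : ℝ := ∑ i, v i * w i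

/-- Euclidean norm of a 3-vector -/
def norm3 (v : Fin 3 → ℝ) : ℝ := Real.sqrt (sq3 v)

/-- internal energy `𝓔(U) = E − |m|²/(2ρ) − |B|²/2` -/
def intE (U : State) : ℝ := toten U - sq3 (mom U) / (2 * dens U) - sq3 (mag U) / 2

/-- admissible set `G = { U : ρ > 0, 𝓔(U) > 0 }` -/
def Adm : Set State := {U | 0 < dens U ∧ 0 < intE U}

/-- Euclidean dot product in `ℝ⁸` -/
def dot8 (U V : State) : ℝ := ∑ i, U i * V i

/-- the vector `n₁ = (1,0,0,0,0,0,0,0)` -/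
def n1 : State := ![1, 0, 0, 0, 0, 0, 0, 0]

/-- the GQL vector `n* = (|u*|²/2, −u*, −B*, 1)` -/
def nstar (us Bs : Fin 3 → ℝ) : State :=
  ![sq3 us / 2, -us 0, -us 1, -us 2, -Bs 0, -Bs 1, -Bs 2, 1]

/-- the ℓ-th directional ideal MHD flux `F_ℓ(U)` (with ideal-gas EOS of index γ) -/
def flux (γ : ℝ) (ℓ : Fin 3) (U : State) : State :=
  let u : Fin 3 → ℝ := fun i => mom U i / dens U
  let ptot : ℝ := (γ - 1) * intE U + sq3 (mag U) / 2
  ![mom U ℓ,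
    mom U ℓ * u 0 - mag U ℓ * mag U 0 + (if ℓ = 0 then ptot else 0),
    mom U ℓ * u 1 - mag U ℓ * mag U 1 + (if ℓ = 1 then ptot else 0),
    mom U ℓ * u 2 - mag U ℓ * mag U 2 + (if ℓ = 2 then ptot else 0),
    u ℓ * mag U 0 - mag U ℓ * u 0,
    u ℓ * mag U 1 - mag U ℓ * u 1,
    u ℓ * mag U 2 - mag U ℓ * u 2,
    u ℓ * (toten U + ptot) - mag U ℓ * dot3 u (mag U)]

/-- `C_s = p/(ρ√(2e))` with `p = (γ−1)ρe`, `e = 𝓔(U)/ρ` -/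
def soundC (γ : ℝ) (U : State) : ℝ :=
  (γ - 1) * intE U / (dens U * Real.sqrt (2 * (intE U / dens U)))

/-- the discriminant `(C_s² + |B|²/ρ)² − 4 C_s² B_ℓ²/ρ` -/
def discrim (γ : ℝ) (ℓ : Fin 3) (U : State) : ℝ :=
  (soundC γ U ^ 2 + sq3 (mag U) / dens U) ^ 2 -
    4 * soundC γ U ^ 2 * mag U ℓ ^ 2 / dens U

/-- the fast speed bound `C_ℓ` -/
def fastC (γ : ℝ) (ℓ : Fin 3) (U : State) : ℝ :=
  (1 / Real.sqrt 2) *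
    Real.sqrt (soundC γ U ^ 2 + sq3 (mag U) / dens U + Real.sqrt (discrim γ ℓ U))

/-- the viscosity coefficient `α_ℓ(U, Ũ)` -/
def alphaSpeed (γ : ℝ) (ℓ : Fin 3) (U Ut : State) : ℝ :=
  max
    (max (|mom U ℓ / dens U| + fastC γ ℓ U) (|mom Ut ℓ / dens Ut| + fastC γ ℓ Ut))
    ((Real.sqrt (dens U) * (mom U ℓ / dens U) +
        Real.sqrt (dens Ut) * (mom Ut ℓ / dens Ut)) /
        (Real.sqrt (dens U) + Real.sqrt (dens Ut)) +
      max (fastC γ ℓ U) (fastC γ ℓ Ut)) +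
  norm3 (fun i => mag U i - mag Ut i) / (Real.sqrt (dens U) + Real.sqrt (dens Ut))

lemma key_frac (x y a b : ℝ) (ha : 0 < a) (hb : 0 < b) :
    (x + y) ^ 2 / (a + b) ≤ x ^ 2 / a + y ^ 2 / b := by
  rw [div_add_div _ _ (ne_of_gt ha) (ne_of_gt hb),
    div_le_div_iff₀ (by positivity) (by positivity)]
  nlinarith [sq_nonneg (x * b - y * a), mul_pos ha hb]

lemma dens_comb (θ : ℝ) (U V : State) :
    dens ((1 - θ) • U + θ • V) = (1 - θ) * dens U + θ * dens V := by
  simp [dens, Pi.add_apply, Pi.smul_apply, smul_eq_mul]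

lemma mom_comb (θ : ℝ) (U V : State) (i : Fin 3) :
    mom ((1 - θ) • U + θ • V) i = (1 - θ) * mom U i + θ * mom V i := by
  simp [mom, Pi.add_apply, Pi.smul_apply, smul_eq_mul]

lemma mag_comb (θ : ℝ) (U V : State) (i : Fin 3) :
    mag ((1 - θ) • U + θ • V) i = (1 - θ) * mag U i + θ * mag V i := by
  simp [mag, Pi.add_apply, Pi.smul_apply, smul_eq_mul]

lemma toten_comb (θ : ℝ) (U V : State) :
    toten ((1 - θ) • U + θ • V) = (1 - θ) * toten U + θ * toten V := by
  simp [toten, Pi.add_apply, Pi.smul_apply, smul_eq_mul]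

lemma intE_concave (θ : ℝ) (h0 : 0 < θ) (h1 : θ < 1) (U V : State)
    (hU : 0 < dens U) (hV : 0 < dens V) :
    (1 - θ) * intE U + θ * intE V ≤ intE ((1 - θ) • U + θ • V) := by
  have hs : (0:ℝ) < 1 - θ := by linarith
  have hmom : sq3 (mom ((1 - θ) • U + θ • V)) / (2 * dens ((1 - θ) • U + θ • V)) ≤
      (1 - θ) * (sq3 (mom U) / (2 * dens U)) + θ * (sq3 (mom V) / (2 * dens V)) := by
    rw [dens_comb]
    unfold sq3
    rw [Finset.sum_div]
    have : ((1 - θ) * ((∑ i, mom U i ^ 2) / (2 * dens U)) +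
        θ * ((∑ i, mom V i ^ 2) / (2 * dens V))) =
        ∑ i : Fin 3, (((1 - θ) * mom U i) ^ 2 / (2 * ((1 - θ) * dens U)) +
          (θ * mom V i) ^ 2 / (2 * (θ * dens V))) := by
      have e1 : ∀ (c ρ : ℝ), c ≠ 0 → ρ ≠ 0 → ∀ w : Fin 3 → ℝ,
          c * ((∑ i, w i ^ 2) / (2 * ρ)) = ∑ i : Fin 3, (c * w i) ^ 2 / (2 * (c * ρ)) := by
        intro c ρ hc hρ w
        have hsq : ∑ i : Fin 3, (c * w i) ^ 2 = c ^ 2 * ∑ i, w i ^ 2 := by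
          rw [Finset.mul_sum]
          apply Finset.sum_congr rfl
          intro i _
          ring
        rw [← Finset.sum_div, hsq]
        field_simp
      rw [Finset.sum_add_distrib, e1 _ _ hs.ne' hU.ne', e1 _ _ h0.ne' hV.ne']
    rw [this]
    apply Finset.sum_le_sum
    intro i _
    rw [mom_comb]
    have : 2 * ((1 - θ) * dens U + θ * dens V) =
        2 * ((1 - θ) * dens U) + 2 * (θ * dens V) := by ring
    rw [this]
    exact key_frac _ _ _ _ (by positivity) (by positivity)
  have hmag : sq3 (mag ((1 - θ) • U + θ • V)) / 2 ≤
      (1 - θ) * (sq3 (mag U) / 2) + θ * (sq3 (mag V) / 2) := by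
    unfold sq3
    rw [Finset.sum_div, ← mul_div_assoc, ← mul_div_assoc, Finset.mul_sum, Finset.mul_sum,
      Finset.sum_div, Finset.sum_div, ← Finset.sum_add_distrib]
    apply Finset.sum_le_sum
    intro i _
    rw [mag_comb]
    rw [← add_div, div_le_div_iff₀ (by norm_num) (by norm_num)]
    nlinarith [sq_nonneg (mag U i - mag V i), mul_pos h0 hs]
  unfold intE
  rw [toten_comb]
  linarith

/-- correctness of the internal-energy limiting step. -/
theorem energy_limiter (Q : ℕ) (hQ : 0 < Q) (Ub : State) (hρ : 0 < dens Ub)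
    (ε : ℝ) (hε : 0 < ε) (hEb : ε ≤ intE Ub)
    (Uc : Fin Q → State) (hUc : ∀ q, 0 < dens (Uc q))
    (m : ℝ)
    (hm : m = Finset.univ.inf' ⟨⟨0, hQ⟩, Finset.mem_univ _⟩ (fun q => intE (Uc q)))
    (hmε : m < ε)
    (θ : ℝ) (hθ : θ = (intE Ub - ε) / (intE Ub - m)) :
    (0 ≤ θ ∧ θ < 1) ∧
      ∀ q : Fin Q,
        0 < dens ((1 - θ) • Ub + θ • Uc q) ∧
        ε ≤ intE ((1 - θ) • Ub + θ • Uc q) ∧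
        ((1 - θ) • Ub + θ • Uc q) ∈ Adm := by
  have hEm : m < intE Ub := lt_of_lt_of_le hmε hEb
  have hden : 0 < intE Ub - m := by linarith
  have hθ0 : 0 ≤ θ := by
    rw [hθ]; exact div_nonneg (by linarith) (le_of_lt hden)
  have hθ1 : θ < 1 := by
    rw [hθ, div_lt_one hden]; linarith
  have hs : (0:ℝ) < 1 - θ := by linarith
  have hθEm : θ * (intE Ub - m) = intE Ub - ε := by
    rw [hθ, div_mul_cancel₀ _ (ne_of_gt hden)]
  refine ⟨⟨hθ0, hθ1⟩, fun q => ?_⟩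
  have hmq : m ≤ intE (Uc q) := by
    rw [hm]; exact Finset.inf'_le _ (Finset.mem_univ q)
  have hd : 0 < dens ((1 - θ) • Ub + θ • Uc q) := by
    rw [dens_comb]
    have := hUc q
    nlinarith
  have hE : ε ≤ intE ((1 - θ) • Ub + θ • Uc q) := by
    rcases eq_or_lt_of_le hθ0 with h0 | h0
    · have : (1 - θ) • Ub + θ • Uc q = Ub := by
        rw [← h0]; simp
      rw [this]; exact hEb
    · have hcc := intE_concave θ h0 hθ1 Ub (Uc q) hρ (hUc q)
      have : ε ≤ (1 - θ) * intE Ub + θ * intE (Uc q) := by nlinarith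
      linarith
  exact ⟨hd, hE, hd, lt_of_lt_of_le hε hE⟩

end IdealMHD
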